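/- arXiv:math/0110082 — 2 statements merged into one kernel-verified Lean document; each statement's English description precedes it below -/
import Mathlib

section
/- Let S = {H : H is a real symmetric 2×2 matrix with det H = −1}. If f : S → ℝ is a continuous function such that f(AᵀHA) = f(H) for every H ∈ S and every A ∈ SL(2,ℤ), then f is constant. -/
open Matrix Real Filter

abbrev SS := {H : Matrix (Fin 2) (Fin 2) ℝ // H.IsSymm ∧ H.det = -1}

lemma pow_mulVec (M : Matrix (Fin 2) (Fin 2) ℝ) (μ : ℝ) (v : Fin 2 → ℝ)
    (h : M.mulVec v = μ • v) (n : ℕ) : (M ^ n).mulVec v = (μ ^ n) • v := by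
  induction n with
  | zero => simp
  | succ n ih =>
    rw [pow_succ, ← Matrix.mulVec_mulVec, h, Matrix.mulVec_smul, ih, smul_smul, pow_succ]
    ring_nf

lemma conj_entries (p p' a b c P V : ℝ) (hd : p - p' ≠ 0) (hPV : P * V = 1)
    (w : Matrix (Fin 2) (Fin 2) ℝ)
    (E1 : w 0 0 * p + w 0 1 = P * p) (E2 : w 1 0 * p + w 1 1 = P)
    (E3 : w 0 0 * p' + w 0 1 = V * p') (E4 : w 1 0 * p' + w 1 1 = V)
    (hnull : a*p^2 + 2*b*p + c = 0) :
    wᵀ * !![a,b;b,c] * w =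
      ((a*p*p' + b*(p+p') + c)/(p-p')^2) • !![(-2:ℝ), p+p'; p+p', -2*p*p']
      + ((a*p'^2 + 2*b*p' + c)/(p-p')^2) • (V^2 • !![(1:ℝ), -p; -p, p^2]) := by
  have hP : P ≠ 0 := left_ne_zero_of_mul_eq_one hPV
  have hw00 : w 0 0 = (P*p - V*p')/(p-p') := (eq_div_iff hd).mpr (by linear_combination E1 - E3)
  have hw01 : w 0 1 = (p*p'*(V-P))/(p-p') := (eq_div_iff hd).mpr (by linear_combination p * E3 - p' * E1)
  have hw10 : w 1 0 = (P-V)/(p-p') := (eq_div_iff hd).mpr (by linear_combination E2 - E4)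
  have hw11 : w 1 1 = (V*p - P*p')/(p-p') := (eq_div_iff hd).mpr (by linear_combination p * E4 - p' * E2)
  have hc : c = -(a*p^2 + 2*b*p) := by linarith
  have hV : V = P⁻¹ := by field_simp; linear_combination hPV
  ext i j
  fin_cases i <;> fin_cases j <;>
    simp only [Matrix.mul_apply, Fin.sum_univ_two, Matrix.transpose_apply,
      Matrix.add_apply, Matrix.smul_apply, Matrix.of_apply, Matrix.cons_val',
      Matrix.cons_val_zero, Matrix.cons_val_one, Matrix.head_cons, Matrix.head_fin_const,
      Matrix.empty_val', Matrix.cons_val_fin_one, smul_eq_mul, Fin.mk_zero, Fin.mk_one,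
      Fin.isValue] <;>
    simp only [hw00, hw01, hw10, hw11, hc, hV] <;> field_simp <;> ring

/-- The key transport lemma: if `H ∈ S` has `(p,1)` as a null vector, where `p` is the
expanding fixed point of an integer matrix of determinant one, then `f H` equals `f` of the
explicit limiting form. -/
lemma key (f : SS → ℝ) (hf : Continuous f)
    (hinv : ∀ (H₁ H₂ : SS) (A : Matrix.SpecialLinearGroup (Fin 2) ℤ),
      ((A : Matrix (Fin 2) (Fin 2) ℤ).map (Int.cast : ℤ → ℝ))ᵀ * (H₁ : Matrix (Fin 2) (Fin 2) ℝ) *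
        ((A : Matrix (Fin 2) (Fin 2) ℤ).map (Int.cast : ℤ → ℝ)) = (H₂ : Matrix (Fin 2) (Fin 2) ℝ) →
      f H₂ = f H₁)
    (p p' : ℝ) (hd : p - p' ≠ 0)
    (Mint : Matrix (Fin 2) (Fin 2) ℤ) (hdet : Mint.det = 1)
    (μ : ℝ) (hμ : 1 < μ)
    (h1 : (Mint.map (Int.cast : ℤ → ℝ)).mulVec ![p, 1] = μ • ![p, 1])
    (h2 : (Mint.map (Int.cast : ℤ → ℝ)).mulVec ![p', 1] = μ⁻¹ • ![p', 1])
    (H G : SS)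
    (hH : (H : Matrix (Fin 2) (Fin 2) ℝ) = !![H.1 0 0, H.1 0 1; H.1 0 1, H.1 1 1])
    (hnull : H.1 0 0 * p^2 + 2 * (H.1 0 1) * p + H.1 1 1 = 0)
    (hG : (G : Matrix (Fin 2) (Fin 2) ℝ) =
      ((H.1 0 0 * p * p' + H.1 0 1 * (p+p') + H.1 1 1)/(p-p')^2) •
        !![(-2:ℝ), p+p'; p+p', -2*p*p']) :
    f H = f G := by
  set a := H.1 0 0
  set b := H.1 0 1
  set c := H.1 1 1
  set Mr := Mint.map (Int.cast : ℤ → ℝ) with hMr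
  have hμ0 : (0:ℝ) < μ := lt_trans one_pos hμ
  have hμne : μ ≠ 0 := ne_of_gt hμ0
  set β := a*p*p' + b*(p+p') + c with hβ
  set δ := a*p'^2 + 2*b*p' + c with hδ
  have claim : ∀ n : ℕ, ((Mr ^ n)ᵀ * (H : Matrix (Fin 2) (Fin 2) ℝ) * (Mr ^ n)) =
      (β/(p-p')^2) • !![(-2:ℝ), p+p'; p+p', -2*p*p']
      + (δ/(p-p')^2) • (((μ⁻¹)^n)^2 • !![(1:ℝ), -p; -p, p^2]) := by
    intro n
    have hPV : μ^n * (μ⁻¹)^n = 1 := by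
      rw [← mul_pow, mul_inv_cancel₀ hμne, one_pow]
    have e1 := pow_mulVec Mr μ ![p,1] h1 n
    have e2 := pow_mulVec Mr (μ⁻¹) ![p',1] h2 n
    have E1 := congrFun e1 0
    have E2 := congrFun e1 1
    have E3 := congrFun e2 0
    have E4 := congrFun e2 1
    simp only [Matrix.mulVec, dotProduct, Fin.sum_univ_two, Matrix.cons_val_zero,
      Matrix.cons_val_one, Matrix.head_cons, Pi.smul_apply, smul_eq_mul, mul_one] at E1 E2 E3 E4
    rw [hH]
    exact conj_entries p p' a b c (μ^n) ((μ⁻¹)^n) hd hPV (Mr ^ n) E1 E2 E3 E4 hnull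
  -- group elements
  set A : Matrix.SpecialLinearGroup (Fin 2) ℤ := ⟨Mint, hdet⟩ with hA
  have hcast : ∀ n : ℕ, (((A^n : Matrix.SpecialLinearGroup (Fin 2) ℤ) :
      Matrix (Fin 2) (Fin 2) ℤ).map (Int.cast : ℤ → ℝ)) = Mr ^ n := by
    intro n
    have : ((A^n : Matrix.SpecialLinearGroup (Fin 2) ℤ) : Matrix (Fin 2) (Fin 2) ℤ) = Mint ^ n := by
      rw [Matrix.SpecialLinearGroup.coe_pow]
    rw [this]
    exact RingHom.map_pow ((Int.castRingHom ℝ).mapMatrix) Mint n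
  -- each conjugate is in S
  have hmem : ∀ n : ℕ, (((Mr^n)ᵀ * (H : Matrix (Fin 2) (Fin 2) ℝ) * (Mr^n)).IsSymm ∧
      ((Mr^n)ᵀ * (H : Matrix (Fin 2) (Fin 2) ℝ) * (Mr^n)).det = -1) := by
    intro n
    constructor
    · unfold Matrix.IsSymm
      rw [Matrix.transpose_mul, Matrix.transpose_mul, Matrix.transpose_transpose,
        H.2.1.eq, Matrix.mul_assoc]
    · rw [Matrix.det_mul, Matrix.det_mul, Matrix.det_transpose, H.2.2]
      have hMrdet : Mr.det = 1 := by
        have := RingHom.map_det (Int.castRingHom ℝ) Mint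
        rw [hdet] at this
        simpa [hMr] using this.symm
      have : (Mr^n).det = 1 := by rw [Matrix.det_pow, hMrdet, one_pow]
      rw [this]; ring
  set Hseq : ℕ → SS := fun n => ⟨(Mr^n)ᵀ * (H : Matrix (Fin 2) (Fin 2) ℝ) * (Mr^n), hmem n⟩
    with hHseq
  have hfn : ∀ n, f (Hseq n) = f H := by
    intro n
    exact hinv H (Hseq n) (A^n) (by rw [hcast n])
  -- tendsto
  have hlim : Tendsto (fun n => (Hseq n : Matrix (Fin 2) (Fin 2) ℝ)) atTop
      (nhds (G : Matrix (Fin 2) (Fin 2) ℝ)) := by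
    have hv : Tendsto (fun n : ℕ => (μ⁻¹)^n) atTop (nhds 0) := by
      apply tendsto_pow_atTop_nhds_zero_of_lt_one
      · positivity
      · rw [inv_lt_one_iff₀]; right; exact hμ
    have hE : Continuous (fun v : ℝ =>
        (β/(p-p')^2) • !![(-2:ℝ), p+p'; p+p', -2*p*p']
        + (δ/(p-p')^2) • (v^2 • !![(1:ℝ), -p; -p, p^2])) := by
      apply Continuous.add continuous_const
      refine Continuous.const_smul (g := fun v : ℝ => v^2 • !![(1:ℝ), -p; -p, p^2]) ?_ (δ/(p-p')^2)
      exact ((continuous_pow 2).smul continuous_const)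
    have := (hE.tendsto 0).comp hv
    simp only [Function.comp_def] at this
    have h0 : (β/(p-p')^2) • !![(-2:ℝ), p+p'; p+p', -2*p*p']
        + (δ/(p-p')^2) • (((0:ℝ))^2 • !![(1:ℝ), -p; -p, p^2])
        = (G : Matrix (Fin 2) (Fin 2) ℝ) := by
      rw [hG]; simp
    rw [h0] at this
    apply this.congr
    intro n
    simp only [Function.comp_apply, hHseq]
    rw [claim n]
  have hlim2 : Tendsto Hseq atTop (nhds G) := by
    rw [tendsto_subtype_rng]
    exact hlim
  have : Tendsto (fun n => f (Hseq n)) atTop (nhds (f G)) := (hf.tendsto G).comp hlim2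
  have h2' : Tendsto (fun _ : ℕ => f H) atTop (nhds (f G)) := by
    apply this.congr
    intro n; rw [hfn n]
  exact tendsto_nhds_unique tendsto_const_nhds h2'

lemma not_isSquare_8N4 (N : ℤ) (hN : N ≠ 0) : ¬ IsSquare ((8:ℤ) * N^4) := by
  rintro ⟨k, hk⟩
  have hN2 : (0:ℤ) < 2 * N^2 := by positivity
  have hsq : ((k:ℝ)/(2*N^2))^2 = 2 := by
    have hk' : ((k:ℝ) * k) = 8 * (N:ℝ)^4 := by exact_mod_cast hk.symm
    have : ((N:ℝ)) ≠ 0 := Int.cast_ne_zero.mpr hN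
    field_simp
    nlinarith [hk']
  have h2 : Real.sqrt 2 = |(k:ℝ)/(2*(N:ℝ)^2)| := by
    rw [← Real.sqrt_sq_eq_abs, hsq]
  have : Irrational (Real.sqrt 2) := irrational_sqrt_two
  rw [h2] at this
  apply this.ne_rat (|k| / (2 * N^2) : ℚ)
  push_cast
  rw [abs_div]
  congr 1
  rw [abs_of_pos]
  positivity

lemma pell_sol (N : ℤ) (hN : N ≠ 0) : ∃ x y : ℤ, x^2 - 8*N^4*y^2 = 1 ∧ 1 < x ∧ 0 < y := by
  have h0 : (0:ℤ) < 8 * N^4 := by positivity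
  obtain ⟨a, hx, hy⟩ := Pell.Solution₁.exists_pos_of_not_isSquare h0 (not_isSquare_8N4 N hN)
  exact ⟨a.x, a.y, a.prop, hx, hy⟩

def Mq (m N x y : ℤ) : Matrix (Fin 2) (Fin 2) ℤ :=
  !![x + 2*m*N*y, -2*(m^2 - 2*N^2)*y; 2*N^2*y, x - 2*m*N*y]

lemma Mq_det (m N x y : ℤ) (hpell : x^2 - 8*N^4*y^2 = 1) : (Mq m N x y).det = 1 := by
  simp [Mq, Matrix.det_fin_two_of]
  linear_combination hpell

lemma Mq_eigen (m N x y : ℤ) (hN : (N:ℝ) ≠ 0) (ε : ℝ) (hε : ε^2 = 2) :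
    ((Mq m N x y).map (Int.cast : ℤ → ℝ)).mulVec ![(m:ℝ)/(N:ℝ) + ε, 1]
      = ((x:ℝ) + 2*ε*(N:ℝ)^2*(y:ℝ)) • ![(m:ℝ)/(N:ℝ) + ε, 1] := by
  obtain ⟨t, ht⟩ : ∃ t : ℝ, (m:ℝ) = t * (N:ℝ) := ⟨(m:ℝ)/(N:ℝ), by field_simp⟩
  have ht2 : (m:ℝ)/(N:ℝ) = t := by rw [ht]; field_simp
  funext i
  fin_cases i <;>
    simp only [Mq, Matrix.mulVec, dotProduct, Fin.sum_univ_two, Matrix.map_apply,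
      Matrix.of_apply, Matrix.cons_val', Matrix.cons_val_zero, Matrix.cons_val_one,
      Matrix.head_cons, Matrix.head_fin_const, Matrix.empty_val', Matrix.cons_val_fin_one,
      Pi.smul_apply, smul_eq_mul, mul_one, Fin.mk_zero, Fin.mk_one, Fin.isValue] <;>
    push_cast <;> rw [ht2, ht]
  · linear_combination (-2*(N:ℝ)^2*(y:ℝ)) * hε
  · ring

lemma pell_matrix (m N : ℤ) (hN : 0 < N) (ε : ℝ) (hε : ε^2 = 2) :
    ∃ (Mint : Matrix (Fin 2) (Fin 2) ℤ) (μ : ℝ), Mint.det = 1 ∧ 1 < μ ∧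
      (Mint.map (Int.cast : ℤ → ℝ)).mulVec ![(m:ℝ)/(N:ℝ) + ε, 1] = μ • ![(m:ℝ)/(N:ℝ) + ε, 1] ∧
      (Mint.map (Int.cast : ℤ → ℝ)).mulVec ![(m:ℝ)/(N:ℝ) - ε, 1]
        = μ⁻¹ • ![(m:ℝ)/(N:ℝ) - ε, 1] := by
  have hNne : (N:ℝ) ≠ 0 := by exact_mod_cast hN.ne'
  have hε0 : ε ≠ 0 := by intro h; rw [h] at hε; norm_num at hε
  obtain ⟨x, y, hpell, hx, hy⟩ := pell_sol N (by exact_mod_cast hN.ne')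
  set y' : ℤ := if 0 < ε then y else -y with hy'
  have hpell' : x^2 - 8*N^4*y'^2 = 1 := by
    rcases ite_eq_or_eq (0 < ε) y (-y) with h | h <;> rw [hy', h] <;> linear_combination hpell
  have hεy' : 0 < ε * (y':ℝ) := by
    rcases lt_trichotomy ε 0 with h | h | h
    · have he : y' = -y := by rw [hy', if_neg (by linarith)]
      rw [he]; push_cast
      have : (0:ℝ) < (y:ℝ) := by exact_mod_cast hy
      nlinarith
    · exact absurd h hε0
    · have he : y' = y := by rw [hy', if_pos h]
      rw [he]
      have : (0:ℝ) < (y:ℝ) := by exact_mod_cast hy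
      nlinarith
  set μ : ℝ := (x:ℝ) + 2*ε*(N:ℝ)^2*(y':ℝ) with hμdef
  have hμ1 : 1 < μ := by
    have hx' : (1:ℝ) < (x:ℝ) := by exact_mod_cast hx
    have hN2 : (0:ℝ) < (N:ℝ)^2 := by positivity
    nlinarith
  have hprod : μ * ((x:ℝ) - 2*ε*(N:ℝ)^2*(y':ℝ)) = 1 := by
    have hpr : ((x:ℝ))^2 - 8*(N:ℝ)^4*(y':ℝ)^2 = 1 := by exact_mod_cast hpell'
    rw [hμdef]
    linear_combination hpr + (-4*(N:ℝ)^4*(y':ℝ)^2) * hε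
  have hinv : μ⁻¹ = (x:ℝ) - 2*ε*(N:ℝ)^2*(y':ℝ) := inv_eq_of_mul_eq_one_right hprod
  refine ⟨Mq m N x y', μ, Mq_det m N x y' hpell', hμ1, Mq_eigen m N x y' hNne ε hε, ?_⟩
  rw [hinv]
  have h2 := Mq_eigen m N x y' hNne (-ε) (by rw [neg_pow]; simp [hε])
  have e1 : (m:ℝ)/(N:ℝ) + -ε = (m:ℝ)/(N:ℝ) - ε := by ring
  have e2 : (x:ℝ) + 2*(-ε)*(N:ℝ)^2*(y':ℝ) = (x:ℝ) - 2*ε*(N:ℝ)^2*(y':ℝ) := by ring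
  rwa [e1, e2] at h2

noncomputable def Gm (q e : ℝ) : Matrix (Fin 2) (Fin 2) ℝ :=
  (e/(2*Real.sqrt 2)) • !![(-2:ℝ), 2*q; 2*q, -2*(q^2-2)]

lemma sqrt2_pos : (0:ℝ) < Real.sqrt 2 := Real.sqrt_pos.mpr (by norm_num)
lemma sqrt2_sq : (Real.sqrt 2)^2 = 2 := Real.sq_sqrt (by norm_num)

lemma Gm_mem (q e : ℝ) (he : e^2 = 1) : (Gm q e).IsSymm ∧ (Gm q e).det = -1 := by
  constructor
  · unfold Matrix.IsSymm Gm
    rw [Matrix.transpose_smul]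
    congr 1
    ext i j
    fin_cases i <;> fin_cases j <;> simp
  · unfold Gm
    rw [Matrix.det_smul, Matrix.det_fin_two_of, Fintype.card_fin]
    have h8 : ((-2:ℝ)) * (-2*(q^2-2)) - 2*q*(2*q) = -8 := by ring
    have : (2 * Real.sqrt 2) ≠ 0 := by positivity
    rw [div_pow, mul_pow, sqrt2_sq, he, h8]
    norm_num

/-- If `H ∈ S` has null vector `(q + σ√2, 1)` with `q` rational and `σ = ±1`, then `f H`
equals `f` of the standard limit form `Gm q e`, `e = -σ(a s + b)`. -/
lemma null_slope (f : SS → ℝ) (hf : Continuous f)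
    (hinv : ∀ (H₁ H₂ : SS) (A : Matrix.SpecialLinearGroup (Fin 2) ℤ),
      ((A : Matrix (Fin 2) (Fin 2) ℤ).map (Int.cast : ℤ → ℝ))ᵀ * (H₁ : Matrix (Fin 2) (Fin 2) ℝ) *
        ((A : Matrix (Fin 2) (Fin 2) ℤ).map (Int.cast : ℤ → ℝ)) = (H₂ : Matrix (Fin 2) (Fin 2) ℝ) →
      f H₂ = f H₁)
    (q : ℚ) (σ : ℝ) (hσ : σ^2 = 1) (H : SS)
    (hnull : H.1 0 0 * ((q:ℝ) + σ*Real.sqrt 2)^2 + 2*(H.1 0 1)*((q:ℝ) + σ*Real.sqrt 2)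
      + H.1 1 1 = 0)
    (G : SS)
    (hGm : (G : Matrix (Fin 2) (Fin 2) ℝ)
        = Gm (q:ℝ) (-σ*(H.1 0 0 * ((q:ℝ) + σ*Real.sqrt 2) + H.1 0 1))) :
    f H = f G := by
  set a := H.1 0 0
  set b := H.1 0 1
  set c := H.1 1 1
  set s : ℝ := (q:ℝ) + σ*Real.sqrt 2 with hs
  set s' : ℝ := (q:ℝ) - σ*Real.sqrt 2 with hs'
  set e : ℝ := -σ*(a*s + b) with he
  have hσ0 : σ ≠ 0 := by intro h; rw [h] at hσ; norm_num at hσ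
  have hd : s - s' ≠ 0 := by
    rw [hs, hs']
    have : (q:ℝ) + σ*Real.sqrt 2 - ((q:ℝ) - σ*Real.sqrt 2) = 2*σ*Real.sqrt 2 := by ring
    rw [this]
    have := sqrt2_pos
    positivity
  have hsym : H.1 1 0 = b := H.2.1.apply 0 1
  have hdet2 : a*c - b*b = -1 := by
    have := H.2.2
    rw [Matrix.det_fin_two] at this
    rw [hsym] at this
    exact this
  have hH : (H : Matrix (Fin 2) (Fin 2) ℝ) = !![a, b; b, c] := by
    ext i j
    fin_cases i <;> fin_cases j <;>
      simp only [Matrix.of_apply, Matrix.cons_val', Matrix.cons_val_zero, Matrix.cons_val_one,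
        Matrix.head_cons, Matrix.head_fin_const, Matrix.empty_val', Matrix.cons_val_fin_one,
        Fin.mk_zero, Fin.mk_one]
    · rfl
    · rfl
    · exact hsym
    · rfl
  -- Pell data
  have hden : (0:ℤ) < (q.den : ℤ) := by exact_mod_cast q.pos
  have hqcast : (q:ℝ) = (q.num : ℝ)/((q.den : ℤ) : ℝ) := by
    rw [Rat.cast_def]; norm_num
  have hε2 : (σ*Real.sqrt 2)^2 = 2 := by
    rw [mul_pow, hσ, sqrt2_sq]; ring
  obtain ⟨Mint, μ, hdet, hμ, h1, h2⟩ := pell_matrix q.num (q.den : ℤ) hden (σ*Real.sqrt 2) hε2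
  rw [← hqcast] at h1 h2
  -- the limit form
  have hβ : a*s*s' + b*(s+s') + c = 2*Real.sqrt 2*e := by
    rw [he, hs, hs']
    have h2' := sqrt2_sq
    linear_combination hnull
  have hss : s + s' = 2*(q:ℝ) := by rw [hs, hs']; ring
  have hprod : s * s' = (q:ℝ)^2 - 2 := by rw [hs, hs']; linear_combination (-1:ℝ) * hε2
  have hdsq : (s - s')^2 = 8 := by rw [hs, hs']; linear_combination (4:ℝ) * hε2
  have hG' : (G : Matrix (Fin 2) (Fin 2) ℝ)
      = ((a*s*s' + b*(s+s') + c)/(s-s')^2) • !![(-2:ℝ), s+s'; s+s', -2*s*s'] := by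
    have hM : !![(-2:ℝ), s+s'; s+s', -2*s*s'] = !![(-2:ℝ), 2*(q:ℝ); 2*(q:ℝ), -2*((q:ℝ)^2-2)] := by
      ext i j
      fin_cases i <;> fin_cases j <;>
        simp only [Matrix.of_apply, Matrix.cons_val', Matrix.cons_val_zero, Matrix.cons_val_one,
          Matrix.head_cons, Matrix.head_fin_const, Matrix.empty_val', Matrix.cons_val_fin_one,
          Fin.mk_zero, Fin.mk_one]
      · linear_combination hss
      · linear_combination hss
      · linear_combination (-2:ℝ) * hprod
    have hsc : e/(2*Real.sqrt 2) = 2*Real.sqrt 2*e/(s-s')^2 := by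
      rw [hdsq]
      have h1 : (2*Real.sqrt 2) ≠ 0 := by have := sqrt2_pos; positivity
      field_simp
      linear_combination (-4*e) * sqrt2_sq
    rw [hGm]
    unfold Gm
    rw [hβ, ← hM, hsc]
  exact key f hf hinv s s' hd Mint hdet μ hμ h1 h2 H G hH hnull hG'

lemma null_e_sq (a b c s σ : ℝ) (hσ : σ^2 = 1) (hnull : a*s^2 + 2*b*s + c = 0)
    (hdet2 : a*c - b*b = -1) : (-σ*(a*s+b))^2 = 1 := by
  linear_combination ((a*s+b)^2) * hσ + a*hnull - hdet2

/-- the sign flip at `q = 1` -/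
lemma signflip (f : SS → ℝ)
    (hinv : ∀ (H₁ H₂ : SS) (A : Matrix.SpecialLinearGroup (Fin 2) ℤ),
      ((A : Matrix (Fin 2) (Fin 2) ℤ).map (Int.cast : ℤ → ℝ))ᵀ * (H₁ : Matrix (Fin 2) (Fin 2) ℝ) *
        ((A : Matrix (Fin 2) (Fin 2) ℤ).map (Int.cast : ℤ → ℝ)) = (H₂ : Matrix (Fin 2) (Fin 2) ℝ) →
      f H₂ = f H₁)
    (Gp Gn : SS) (hp : (Gp : Matrix (Fin 2) (Fin 2) ℝ) = Gm 1 1)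
    (hn : (Gn : Matrix (Fin 2) (Fin 2) ℝ) = Gm 1 (-1)) : f Gp = f Gn := by
  have hdetA : (!![0,-1;1,0] : Matrix (Fin 2) (Fin 2) ℤ).det = 1 := by
    simp [Matrix.det_fin_two_of]
  refine (hinv Gp Gn ⟨!![0,-1;1,0], hdetA⟩ ?_).symm
  have hmap : ((!![0,-1;1,0] : Matrix (Fin 2) (Fin 2) ℤ).map (Int.cast : ℤ → ℝ))
      = !![0,-1;1,0] := by
    ext i j
    fin_cases i <;> fin_cases j <;> simp
  rw [Matrix.SpecialLinearGroup.coe_mk, hmap, hp, hn]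
  unfold Gm
  ext i j
  fin_cases i <;> fin_cases j <;>
    simp only [Matrix.mul_apply, Fin.sum_univ_two, Matrix.transpose_apply, Matrix.smul_apply,
      Matrix.of_apply, Matrix.cons_val', Matrix.cons_val_zero, Matrix.cons_val_one,
      Matrix.head_cons, Matrix.head_fin_const, Matrix.empty_val', Matrix.cons_val_fin_one,
      smul_eq_mul, Fin.mk_zero, Fin.mk_one, Fin.isValue] <;> ring

/-- the crossing relation between different rationals -/
lemma cross (f : SS → ℝ) (hf : Continuous f)
    (hinv : ∀ (H₁ H₂ : SS) (A : Matrix.SpecialLinearGroup (Fin 2) ℤ),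
      ((A : Matrix (Fin 2) (Fin 2) ℤ).map (Int.cast : ℤ → ℝ))ᵀ * (H₁ : Matrix (Fin 2) (Fin 2) ℝ) *
        ((A : Matrix (Fin 2) (Fin 2) ℤ).map (Int.cast : ℤ → ℝ)) = (H₂ : Matrix (Fin 2) (Fin 2) ℝ) →
      f H₂ = f H₁)
    (q r : ℚ) (ε : ℝ) (hε : ε^2 = 1)
    (G1 G2 : SS) (hG1 : (G1 : Matrix (Fin 2) (Fin 2) ℝ) = Gm (q:ℝ) (-ε))
    (hG2 : (G2 : Matrix (Fin 2) (Fin 2) ℝ) = Gm (r:ℝ) (-ε)) :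
    f G1 = f G2 := by
  have hst : ((q:ℝ) + Real.sqrt 2) - ((r:ℝ) - Real.sqrt 2) ≠ 0 := by
    intro h
    apply irrational_sqrt_two
    refine ⟨(r - q)/2, ?_⟩
    push_cast
    linarith
  obtain ⟨k, hk⟩ : ∃ k : ℝ, k * (((q:ℝ) + Real.sqrt 2) - ((r:ℝ) - Real.sqrt 2)) = 2*ε :=
    ⟨2*ε/(((q:ℝ) + Real.sqrt 2) - ((r:ℝ) - Real.sqrt 2)), by field_simp⟩
  have hsymm : (!![k, -k*(((q:ℝ) + Real.sqrt 2)+((r:ℝ) - Real.sqrt 2))/2;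
      -k*(((q:ℝ) + Real.sqrt 2)+((r:ℝ) - Real.sqrt 2))/2,
      k*((q:ℝ) + Real.sqrt 2)*((r:ℝ) - Real.sqrt 2)] : Matrix (Fin 2) (Fin 2) ℝ).IsSymm := by
    unfold Matrix.IsSymm
    ext i j
    fin_cases i <;> fin_cases j <;> simp
  have hdetH : (!![k, -k*(((q:ℝ) + Real.sqrt 2)+((r:ℝ) - Real.sqrt 2))/2;
      -k*(((q:ℝ) + Real.sqrt 2)+((r:ℝ) - Real.sqrt 2))/2,
      k*((q:ℝ) + Real.sqrt 2)*((r:ℝ) - Real.sqrt 2)] : Matrix (Fin 2) (Fin 2) ℝ).det = -1 := by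
    rw [Matrix.det_fin_two_of]
    linear_combination (-1/4)*(k*(((q:ℝ) + Real.sqrt 2) - ((r:ℝ) - Real.sqrt 2)) + 2*ε)*hk
      + (-1)*hε
  set H : SS := ⟨_, hsymm, hdetH⟩ with hH
  have ha : (H : Matrix (Fin 2) (Fin 2) ℝ) 0 0 = k := by simp [hH]
  have hb : (H : Matrix (Fin 2) (Fin 2) ℝ) 0 1
      = -k*(((q:ℝ) + Real.sqrt 2)+((r:ℝ) - Real.sqrt 2))/2 := by simp [hH]
  have hc : (H : Matrix (Fin 2) (Fin 2) ℝ) 1 1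
      = k*((q:ℝ) + Real.sqrt 2)*((r:ℝ) - Real.sqrt 2) := by simp [hH]
  have happ1 : f H = f G1 := by
    refine null_slope f hf hinv q 1 (by norm_num) H ?_ G1 ?_
    · rw [ha, hb, hc]; ring
    · have hval : (-1:ℝ)*(k*((q:ℝ)+1*Real.sqrt 2)
          + -k*(((q:ℝ) + Real.sqrt 2)+((r:ℝ) - Real.sqrt 2))/2) = -ε := by
        linear_combination (-1/2)*hk
      rw [hG1, ha, hb, hval]
  have happ2 : f H = f G2 := by
    refine null_slope f hf hinv r (-1) (by norm_num) H ?_ G2 ?_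
    · rw [ha, hb, hc]; ring
    · have hval : -(-1:ℝ)*(k*((r:ℝ)+(-1)*Real.sqrt 2)
          + -k*(((q:ℝ) + Real.sqrt 2)+((r:ℝ) - Real.sqrt 2))/2) = -ε := by
        linear_combination (-1/2)*hk
      rw [hG2, ha, hb, hval]
  rw [← happ1, happ2]

noncomputable def Gbase : SS := ⟨Gm 1 1, Gm_mem 1 1 (by norm_num)⟩

lemma constGm (f : SS → ℝ) (hf : Continuous f)
    (hinv : ∀ (H₁ H₂ : SS) (A : Matrix.SpecialLinearGroup (Fin 2) ℤ),
      ((A : Matrix (Fin 2) (Fin 2) ℤ).map (Int.cast : ℤ → ℝ))ᵀ * (H₁ : Matrix (Fin 2) (Fin 2) ℝ) *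
        ((A : Matrix (Fin 2) (Fin 2) ℤ).map (Int.cast : ℤ → ℝ)) = (H₂ : Matrix (Fin 2) (Fin 2) ℝ) →
      f H₂ = f H₁)
    (q : ℚ) (e : ℝ) (he : e^2 = 1) (G : SS) (hG : (G : Matrix (Fin 2) (Fin 2) ℝ) = Gm (q:ℝ) e) :
    f G = f Gbase := by
  have hne : ((-e):ℝ)^2 = 1 := by rw [neg_sq]; exact he
  set Gq1 : SS := ⟨Gm (((1:ℚ)):ℝ) e, by rw [Rat.cast_one]; exact Gm_mem 1 e he⟩ with hGq1
  have h1 : f G = f Gq1 := by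
    refine cross f hf hinv q 1 (-e) hne G Gq1 ?_ ?_
    · rw [neg_neg]; exact hG
    · rw [neg_neg]
  rw [h1]
  have he' : e = 1 ∨ e = -1 := by
    have h0 : (e-1)*(e+1) = 0 := by linear_combination he
    rcases mul_eq_zero.mp h0 with h | h
    · left; linarith
    · right; linarith
  rcases he' with h | h
  · apply congrArg f
    apply Subtype.ext
    show Gm (((1:ℚ)):ℝ) e = Gm 1 1
    rw [h, Rat.cast_one]
  · refine (signflip f hinv Gbase Gq1 rfl ?_).symm
    show Gm (((1:ℚ)):ℝ) e = Gm 1 (-1)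
    rw [h, Rat.cast_one]

lemma dense_step (f : SS → ℝ) (hf : Continuous f)
    (hinv : ∀ (H₁ H₂ : SS) (A : Matrix.SpecialLinearGroup (Fin 2) ℤ),
      ((A : Matrix (Fin 2) (Fin 2) ℤ).map (Int.cast : ℤ → ℝ))ᵀ * (H₁ : Matrix (Fin 2) (Fin 2) ℝ) *
        ((A : Matrix (Fin 2) (Fin 2) ℤ).map (Int.cast : ℤ → ℝ)) = (H₂ : Matrix (Fin 2) (Fin 2) ℝ) →
      f H₂ = f H₁)
    (H : SS) (hne : (H : Matrix (Fin 2) (Fin 2) ℝ) 0 0 ≠ 0) : f H = f Gbase := by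
  set a := (H : Matrix (Fin 2) (Fin 2) ℝ) 0 0 with hadef
  set b := (H : Matrix (Fin 2) (Fin 2) ℝ) 0 1 with hbdef
  set c := (H : Matrix (Fin 2) (Fin 2) ℝ) 1 1 with hcdef
  have hsym : (H : Matrix (Fin 2) (Fin 2) ℝ) 1 0 = b := H.2.1.apply 0 1
  have hdet2 : a*c - b*b = -1 := by
    have := H.2.2
    rw [Matrix.det_fin_two] at this
    rw [hsym] at this
    exact this
  set σ₁ : ℝ := (-b+1)/a with hσ₁
  set σ₂ : ℝ := (-b-1)/a with hσ₂
  have hsub : σ₁ - σ₂ = 2/a := by rw [hσ₁, hσ₂]; field_simp; ring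
  have hsne : σ₁ - σ₂ ≠ 0 := by rw [hsub]; positivity
  have hδpos : ∀ n : ℕ, 0 < min (1/((n:ℝ)+1)) |σ₁ - σ₂| := by
    intro n
    apply lt_min
    · positivity
    · exact abs_pos.mpr hsne
  have hex : ∀ n : ℕ, ∃ q : ℚ, σ₁ - Real.sqrt 2 < q ∧
      (q:ℝ) < σ₁ - Real.sqrt 2 + min (1/((n:ℝ)+1)) |σ₁ - σ₂| :=
    fun n => exists_rat_btwn (by linarith [hδpos n])
  choose qn hq1 hq2 using hex
  -- d n and its properties
  have hd1 : ∀ n, σ₁ < (qn n : ℝ) + Real.sqrt 2 := by intro n; linarith [hq1 n]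
  have hd2 : ∀ n, (qn n : ℝ) + Real.sqrt 2 < σ₁ + min (1/((n:ℝ)+1)) |σ₁ - σ₂| := by
    intro n; linarith [hq2 n]
  have hdne : ∀ n, (qn n : ℝ) + Real.sqrt 2 - σ₂ ≠ 0 := by
    intro n
    rcases lt_or_gt_of_ne (sub_ne_zero.mp hsne) with h | h
    · -- σ₁ < σ₂
      have habs : |σ₁ - σ₂| = σ₂ - σ₁ := by rw [abs_of_neg (by linarith)]; ring
      have : (qn n : ℝ) + Real.sqrt 2 < σ₂ := by
        linarith [hd2 n, min_le_right (1/((n:ℝ)+1)) |σ₁ - σ₂|, habs]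
      intro hcon; linarith [sub_eq_zero.mp hcon]
    · -- σ₂ < σ₁
      have : σ₂ < (qn n : ℝ) + Real.sqrt 2 := lt_trans h (hd1 n)
      intro hcon; linarith [sub_eq_zero.mp hcon]
  -- the approximating forms
  have hkex : ∀ n : ℕ, ∃ k : ℝ, k * ((qn n : ℝ) + Real.sqrt 2 - σ₂) = 2 :=
    fun n => ⟨2/((qn n : ℝ) + Real.sqrt 2 - σ₂), div_mul_cancel₀ 2 (hdne n)⟩
  choose kk hkk using hkex
  have hsymm : ∀ n, (!![kk n, -(kk n)*(((qn n : ℝ) + Real.sqrt 2) + σ₂)/2;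
      -(kk n)*(((qn n : ℝ) + Real.sqrt 2) + σ₂)/2,
      (kk n)*((qn n : ℝ) + Real.sqrt 2)*σ₂] : Matrix (Fin 2) (Fin 2) ℝ).IsSymm := by
    intro n
    unfold Matrix.IsSymm
    ext i j
    fin_cases i <;> fin_cases j <;> simp
  have hdetn : ∀ n, (!![kk n, -(kk n)*(((qn n : ℝ) + Real.sqrt 2) + σ₂)/2;
      -(kk n)*(((qn n : ℝ) + Real.sqrt 2) + σ₂)/2,
      (kk n)*((qn n : ℝ) + Real.sqrt 2)*σ₂] : Matrix (Fin 2) (Fin 2) ℝ).det = -1 := by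
    intro n
    rw [Matrix.det_fin_two_of]
    linear_combination (-1/4)*((kk n)*((qn n : ℝ) + Real.sqrt 2 - σ₂) + 2)*(hkk n)
  set Hn : ℕ → SS := fun n => ⟨_, hsymm n, hdetn n⟩ with hHn
  -- each f (Hn n) = f Gbase
  have hfn : ∀ n, f (Hn n) = f Gbase := by
    intro n
    have ha' : (Hn n : Matrix (Fin 2) (Fin 2) ℝ) 0 0 = kk n := by simp [hHn]
    have hb' : (Hn n : Matrix (Fin 2) (Fin 2) ℝ) 0 1
        = -(kk n)*(((qn n : ℝ) + Real.sqrt 2) + σ₂)/2 := by simp [hHn]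
    have hc' : (Hn n : Matrix (Fin 2) (Fin 2) ℝ) 1 1
        = (kk n)*((qn n : ℝ) + Real.sqrt 2)*σ₂ := by simp [hHn]
    have step : f (Hn n) = f (⟨Gm ((qn n : ℚ):ℝ) (-1), Gm_mem _ _ (by norm_num)⟩ : SS) := by
      refine null_slope f hf hinv (qn n) 1 (by norm_num) (Hn n) ?_
        (⟨Gm ((qn n : ℚ):ℝ) (-1), Gm_mem _ _ (by norm_num)⟩ : SS) ?_
      · rw [ha', hb', hc']; ring
      · have hval : (-1:ℝ)*((kk n)*((qn n : ℝ)+1*Real.sqrt 2)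
            + -(kk n)*(((qn n : ℝ) + Real.sqrt 2) + σ₂)/2) = -1 := by
          linear_combination (-1/2)*(hkk n)
        show Gm ((qn n : ℚ):ℝ) (-1) = _
        rw [ha', hb', hval]
    rw [step]
    exact constGm f hf hinv (qn n) (-1) (by norm_num) _ rfl
  -- convergence of Hn to H
  have htd : Filter.Tendsto (fun n => (qn n : ℝ) + Real.sqrt 2) atTop (nhds σ₁) := by
    have hup : Filter.Tendsto (fun n : ℕ => σ₁ + 1/((n:ℝ)+1)) atTop (nhds σ₁) := by
      have := tendsto_one_div_add_atTop_nhds_zero_nat (𝕜 := ℝ)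
      have h2 := Filter.Tendsto.const_add σ₁ this
      simpa using h2
    apply tendsto_of_tendsto_of_tendsto_of_le_of_le tendsto_const_nhds hup
    · intro n; exact le_of_lt (hd1 n)
    · intro n
      have := hd2 n
      have hm : min (1/((n:ℝ)+1)) |σ₁ - σ₂| ≤ 1/((n:ℝ)+1) := min_le_left _ _
      linarith
  have htk : Filter.Tendsto (fun n => kk n) atTop (nhds a) := by
    have hkkeq : ∀ n, kk n = 2/((qn n : ℝ) + Real.sqrt 2 - σ₂) :=
      fun n => (eq_div_iff (hdne n)).mpr (hkk n)
    have : Filter.Tendsto (fun n => 2/((qn n : ℝ) + Real.sqrt 2 - σ₂)) atTop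
        (nhds (2/(σ₁ - σ₂))) := by
      apply Filter.Tendsto.div tendsto_const_nhds (htd.sub tendsto_const_nhds) hsne
    have h2a : 2/(σ₁ - σ₂) = a := by rw [hsub]; field_simp
    rw [h2a] at this
    exact this.congr (fun n => (hkkeq n).symm)
  have hlim : Filter.Tendsto (fun n => (Hn n : Matrix (Fin 2) (Fin 2) ℝ)) atTop
      (nhds (H : Matrix (Fin 2) (Fin 2) ℝ)) := by
    refine tendsto_pi_nhds.mpr ?_
    intro i
    rw [tendsto_pi_nhds]
    intro j
    have hb2 : b = -a*(σ₁+σ₂)/2 := by rw [hσ₁, hσ₂]; field_simp; ring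
    have hc2 : c = a*σ₁*σ₂ := by
      rw [hσ₁, hσ₂]; field_simp
      linear_combination hdet2
    fin_cases i <;> fin_cases j <;>
      simp only [hHn, Matrix.of_apply, Matrix.cons_val', Matrix.cons_val_zero,
        Matrix.cons_val_one, Matrix.head_cons, Matrix.head_fin_const, Matrix.empty_val',
        Matrix.cons_val_fin_one, Fin.mk_zero, Fin.mk_one]
    · exact htk
    · -- entry 0 1 : tends to b
      rw [show (H : Matrix (Fin 2) (Fin 2) ℝ) 0 1 = -a*(σ₁+σ₂)/2 from hb2]
      have := ((htk.neg.mul (htd.add (tendsto_const_nhds (x := σ₂)))).div_const 2)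
      simpa [neg_mul] using this
    · rw [show (H : Matrix (Fin 2) (Fin 2) ℝ) 1 0 = -a*(σ₁+σ₂)/2 from hsym.trans hb2]
      have := ((htk.neg.mul (htd.add (tendsto_const_nhds (x := σ₂)))).div_const 2)
      simpa [neg_mul] using this
    · rw [show (H : Matrix (Fin 2) (Fin 2) ℝ) 1 1 = a*σ₁*σ₂ from hc2]
      exact (htk.mul htd).mul (tendsto_const_nhds (x := σ₂))
  have hlim2 : Filter.Tendsto Hn atTop (nhds H) := by
    rw [tendsto_subtype_rng]
    exact hlim
  have hft : Filter.Tendsto (fun n => f (Hn n)) atTop (nhds (f H)) := (hf.tendsto H).comp hlim2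
  have hconst : Filter.Tendsto (fun _ : ℕ => f Gbase) atTop (nhds (f H)) :=
    hft.congr (fun n => hfn n)
  exact (tendsto_nhds_unique tendsto_const_nhds hconst).symm

lemma conj_mem (H : SS) (B : Matrix (Fin 2) (Fin 2) ℝ) (hdetB : B.det = 1) :
    (Bᵀ * (H : Matrix (Fin 2) (Fin 2) ℝ) * B).IsSymm ∧
      (Bᵀ * (H : Matrix (Fin 2) (Fin 2) ℝ) * B).det = -1 := by
  constructor
  · unfold Matrix.IsSymm
    rw [Matrix.transpose_mul, Matrix.transpose_mul, Matrix.transpose_transpose,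
      H.2.1.eq, Matrix.mul_assoc]
  · rw [Matrix.det_mul, Matrix.det_mul, Matrix.det_transpose, hdetB, H.2.2]; ring

/-- Any continuous function on the set of real symmetric `2×2` matrices of determinant `−1`
(i.e. quadratic forms of signature `(1,1)` and volume `1`) which is invariant under the
congruence action `H ↦ AᵀHA` of `SL(2,ℤ)` is constant. -/
theorem sl2z_invariant_continuous_function_constant
    (f : {H : Matrix (Fin 2) (Fin 2) ℝ // H.IsSymm ∧ H.det = -1} → ℝ)
    (hf : Continuous f)
    (hinv : ∀ (H₁ H₂ : {H : Matrix (Fin 2) (Fin 2) ℝ // H.IsSymm ∧ H.det = -1})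
      (A : Matrix.SpecialLinearGroup (Fin 2) ℤ),
      ((A : Matrix (Fin 2) (Fin 2) ℤ).map (Int.cast : ℤ → ℝ))ᵀ * (H₁ : Matrix (Fin 2) (Fin 2) ℝ) *
        ((A : Matrix (Fin 2) (Fin 2) ℤ).map (Int.cast : ℤ → ℝ)) = (H₂ : Matrix (Fin 2) (Fin 2) ℝ) →
      f H₂ = f H₁) :
    ∀ H₁ H₂, f H₁ = f H₂ := by
  have hall : ∀ H : SS, f H = f Gbase := by
    intro H
    by_cases h0 : (H : Matrix (Fin 2) (Fin 2) ℝ) 0 0 ≠ 0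
    · exact dense_step f hf hinv H h0
    · push_neg at h0
      have hsym : (H : Matrix (Fin 2) (Fin 2) ℝ) 1 0 = (H : Matrix (Fin 2) (Fin 2) ℝ) 0 1 :=
        H.2.1.apply 0 1
      have hdet2 : (H : Matrix (Fin 2) (Fin 2) ℝ) 0 1 * (H : Matrix (Fin 2) (Fin 2) ℝ) 0 1 = 1 := by
        have := H.2.2
        rw [Matrix.det_fin_two, hsym, h0] at this
        linarith
      -- helper to conjugate by an integer shear
      have hshear : ∀ (ε : ℤ), ε = 1 ∨ ε = -1 → ∃ H' : SS, f H' = f H ∧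
          (H' : Matrix (Fin 2) (Fin 2) ℝ) 0 0
            = 2*(ε:ℝ)*(H : Matrix (Fin 2) (Fin 2) ℝ) 0 1 + (H : Matrix (Fin 2) (Fin 2) ℝ) 1 1 := by
        intro ε hε
        have hdetA : (!![1,0;ε,1] : Matrix (Fin 2) (Fin 2) ℤ).det = 1 := by
          simp [Matrix.det_fin_two_of]
        have hmap : ((!![1,0;ε,1] : Matrix (Fin 2) (Fin 2) ℤ).map (Int.cast : ℤ → ℝ))
            = !![1,0;(ε:ℝ),1] := by
          ext i j
          fin_cases i <;> fin_cases j <;> simp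
        have hdetB : (!![1,0;(ε:ℝ),1] : Matrix (Fin 2) (Fin 2) ℝ).det = 1 := by
          simp [Matrix.det_fin_two_of]
        refine ⟨⟨_, conj_mem H !![1,0;(ε:ℝ),1] hdetB⟩,
          hinv H _ ⟨!![1,0;ε,1], hdetA⟩ (by rw [hmap]), ?_⟩
        show ((!![1,0;(ε:ℝ),1])ᵀ * (H : Matrix (Fin 2) (Fin 2) ℝ) * !![1,0;(ε:ℝ),1]) 0 0 = _
        simp only [Matrix.mul_apply, Fin.sum_univ_two, Matrix.transpose_apply,
          Matrix.of_apply, Matrix.cons_val', Matrix.cons_val_zero, Matrix.cons_val_one,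
          Matrix.head_cons, Matrix.head_fin_const, Matrix.empty_val', Matrix.cons_val_fin_one,
          Fin.mk_zero, Fin.mk_one, Fin.isValue]
        rw [hsym, h0]
        have hee : (ε:ℝ)*(ε:ℝ) = 1 := by
          rcases hε with h | h <;> rw [h] <;> norm_num
        linear_combination ((H : Matrix (Fin 2) (Fin 2) ℝ) 1 1) * hee
      by_cases h1 : 2*((1:ℤ):ℝ)*(H : Matrix (Fin 2) (Fin 2) ℝ) 0 1
          + (H : Matrix (Fin 2) (Fin 2) ℝ) 1 1 ≠ 0
      · obtain ⟨H', hfH', hH'⟩ := hshear 1 (Or.inl rfl)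
        rw [← hfH']
        apply dense_step f hf hinv H'
        rw [hH']
        exact h1
      · push_neg at h1
        obtain ⟨H', hfH', hH'⟩ := hshear (-1) (Or.inr rfl)
        rw [← hfH']
        apply dense_step f hf hinv H'
        rw [hH']
        -- 2*(-1)*b + c ≠ 0 : else b = 0 contradicting b*b = 1
        intro hcon
        push_cast at h1 hcon
        have hb0 : (H : Matrix (Fin 2) (Fin 2) ℝ) 0 1 = 0 := by linarith
        rw [hb0] at hdet2
        norm_num at hdet2
  intro H₁ H₂
  rw [hall H₁, hall H₂]
end

section
/- Let A be the integer matrix [[2,1],[1,1]], let λ > 1 and Y ∈ ℝ² be such that AY = λY with Y ≠ 0, and let g be a real symmetric 2×2 matrix with Aᵀ g A = g. Let f : ℝ² → ℝ be a continuously differentiable function which is ℤ²-periodic (f(x + z) = f(x) for all z ∈ ℤ²). Define h_n : ℝ² → (2×2 real matrices) by h_n(x) = (Aⁿ)ᵀ ( g + f(Aⁿ x) · (gY)(gY)ᵀ ) Aⁿ. Then h_n converges to the constant map g uniformly on ℝ², and the first derivatives of h_n converge uniformly to 0; i.e., sup_{x∈ℝ²} ‖h_n(x) − g‖ → 0 and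 sup_{x∈ℝ²} ‖D h_n(x)‖ → 0. -/
open Matrix Filter Topology


lemma vecMulVec_conj (M : Matrix (Fin 2) (Fin 2) ℝ) (u : Fin 2 → ℝ) :
    Mᵀ * vecMulVec u u * M = vecMulVec (Mᵀ *ᵥ u) (Mᵀ *ᵥ u) := by
  ext i j
  simp [Matrix.mul_apply, Matrix.vecMulVec_apply, Matrix.mulVec, dotProduct,
    Fin.sum_univ_two, Matrix.transpose_apply]
  fin_cases i <;> fin_cases j <;> simp <;> ring

lemma exists_N_pow (r C ε : ℝ) (hr0 : 0 ≤ r) (hr1 : r < 1) (hε : 0 < ε) :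
    ∃ N : ℕ, ∀ n ≥ N, r ^ n * C < ε := by
  have h1 : Tendsto (fun n : ℕ => r ^ n * C) atTop (𝓝 0) := by
    simpa using (tendsto_pow_atTop_nhds_zero_of_lt_one hr0 hr1).mul_const C
  obtain ⟨N, hN⟩ := Metric.tendsto_atTop.mp h1 ε hε
  exact ⟨N, fun n hn => (le_abs_self _).trans_lt
    (by have := hN n hn; rw [Real.dist_eq, sub_zero] at this; exact this)⟩

lemma periodic_reduce (F : (Fin 2 → ℝ) → ℝ)
    (hper : ∀ (x : Fin 2 → ℝ) (z : Fin 2 → ℤ), F (x + fun i => (z i : ℝ)) = F x)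
    (x : Fin 2 → ℝ) : ∃ y ∈ Set.Icc (0 : Fin 2 → ℝ) 1, F x = F y := by
  refine ⟨fun i => Int.fract (x i), ?_, ?_⟩
  · constructor
    · exact fun i => Int.fract_nonneg _
    · exact fun i => (Int.fract_lt_one _).le
  · have : ((fun i => Int.fract (x i)) + fun i => ((⌊x i⌋ : ℤ) : ℝ)) = x := by
      funext i; simp only [Pi.add_apply]; rw [Int.fract]; ring
    rw [← hper (fun i => Int.fract (x i)) (fun i => ⌊x i⌋), this]

lemma periodic_bound (F : (Fin 2 → ℝ) → ℝ) (hc : Continuous F)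
    (hper : ∀ (x : Fin 2 → ℝ) (z : Fin 2 → ℤ), F (x + fun i => (z i : ℝ)) = F x) :
    ∃ M : ℝ, 0 ≤ M ∧ ∀ x, |F x| ≤ M := by
  obtain ⟨M, hM⟩ := (isCompact_Icc (a := (0 : Fin 2 → ℝ)) (b := 1)).exists_bound_of_continuousOn
    hc.continuousOn
  have h0 : (0 : Fin 2 → ℝ) ∈ Set.Icc (0 : Fin 2 → ℝ) 1 := by
    constructor
    · exact le_refl _
    · exact fun i => zero_le_one
  refine ⟨M, le_trans (norm_nonneg _) (hM 0 h0), fun x => ?_⟩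
  obtain ⟨y, hy, hxy⟩ := periodic_reduce F hper x
  rw [hxy]
  exact hM y hy

set_option maxHeartbeats 1000000 in
/-- The example of Remark 3 after Proposition 3.11: let `A = [[2,1],[1,1]]` be the Anosov
matrix, `Y` an eigenvector for an eigenvalue `l > 1`, `g` an `A`-invariant symmetric matrix
and `f` a `C¹`, `ℤ²`-periodic function. Then the pullbacks
`hₙ(x) = (Aⁿ)ᵀ (g + f(Aⁿx) · (gY)(gY)ᵀ) Aⁿ` of the perturbed metric `g + f·(gY)(gY)ᵀ`
converge to `g` uniformly, together with their first derivatives (which converge uniformly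
to `0`); i.e. the convergence is `C¹`. -/
theorem anosov_pullback_tendsto_C1
    (A : Matrix (Fin 2) (Fin 2) ℝ) (hA : A = !![2, 1; 1, 1])
    (l : ℝ) (hl : 1 < l) (Y : Fin 2 → ℝ) (hY : Y ≠ 0) (hAY : A *ᵥ Y = l • Y)
    (g : Matrix (Fin 2) (Fin 2) ℝ) (hgsymm : g.IsSymm) (hAg : Aᵀ * g * A = g)
    (f : (Fin 2 → ℝ) → ℝ) (hf : ContDiff ℝ 1 f)
    (hper : ∀ (x : Fin 2 → ℝ) (z : Fin 2 → ℤ), f (x + fun i => (z i : ℝ)) = f x)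
    (h : ℕ → (Fin 2 → ℝ) → Matrix (Fin 2) (Fin 2) ℝ)
    (hdef : ∀ n x, h n x =
      (A ^ n)ᵀ * (g + f ((A ^ n) *ᵥ x) • vecMulVec (g *ᵥ Y) (g *ᵥ Y)) * (A ^ n)) :
    (∀ ε > 0, ∃ N : ℕ, ∀ n ≥ N, ∀ (x : Fin 2 → ℝ) (i j : Fin 2),
      |h n x i j - g i j| < ε) ∧
    (∀ ε > 0, ∃ N : ℕ, ∀ n ≥ N, ∀ (x : Fin 2 → ℝ) (i j : Fin 2),
      ‖fderiv ℝ (fun y => h n y i j) x‖ < ε) := by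
  have hl0 : (0 : ℝ) < l := by linarith
  -- component equations of the eigenvalue relation
  have e0 : 2 * Y 0 + Y 1 = l * Y 0 := by
    have := congrFun hAY 0
    simpa [hA, Matrix.mulVec, dotProduct, Fin.sum_univ_two] using this
  have e1 : Y 0 + Y 1 = l * Y 1 := by
    have := congrFun hAY 1
    simpa [hA, Matrix.mulVec, dotProduct, Fin.sum_univ_two] using this
  have hY1 : Y 1 ≠ 0 := by
    intro h1
    apply hY
    have h0 : Y 0 = 0 := by rw [h1] at e1; linarith [e1]
    funext i
    fin_cases i
    · exact h0
    · exact h1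
  have hl2 : l ^ 2 = 3 * l - 1 := by
    have key : (l ^ 2 - 3 * l + 1) * Y 1 = 0 := by nlinarith [e0, e1]
    have := mul_eq_zero.mp key
    rcases this with h' | h'
    · linarith
    · exact absurd h' hY1
  have hl2' : 2 < l := by nlinarith [hl2]
  set u : Fin 2 → ℝ := g *ᵥ Y with hu
  -- Aᵀ *ᵥ u = l⁻¹ • u
  have hAu : Aᵀ *ᵥ u = l⁻¹ • u := by
    have h1 : u = l • (Aᵀ *ᵥ u) := by
      calc u = (Aᵀ * g * A) *ᵥ Y := by rw [hAg]
        _ = Aᵀ *ᵥ (g *ᵥ (A *ᵥ Y)) := by rw [← Matrix.mulVec_mulVec, ← Matrix.mulVec_mulVec]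
        _ = Aᵀ *ᵥ (g *ᵥ (l • Y)) := by rw [hAY]
        _ = l • (Aᵀ *ᵥ u) := by rw [Matrix.mulVec_smul, Matrix.mulVec_smul]
    have h2 : l⁻¹ • u = Aᵀ *ᵥ u := by
      conv_lhs => rw [h1]
      rw [smul_smul, inv_mul_cancel₀ (ne_of_gt hl0), one_smul]
    exact h2.symm
  have hAnu : ∀ n : ℕ, (A ^ n)ᵀ *ᵥ u = (l⁻¹) ^ n • u := by
    intro n
    induction n with
    | zero => simp
    | succ n ih =>
      rw [pow_succ, Matrix.transpose_mul, ← Matrix.mulVec_mulVec, ih, Matrix.mulVec_smul,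
        hAu, smul_smul, pow_succ]
  have hAng : ∀ n : ℕ, (A ^ n)ᵀ * g * (A ^ n) = g := by
    intro n
    induction n with
    | zero => simp
    | succ n ih =>
      rw [pow_succ, Matrix.transpose_mul]
      calc Aᵀ * (A ^ n)ᵀ * g * (A ^ n * A) = Aᵀ * ((A ^ n)ᵀ * g * A ^ n) * A := by
            noncomm_ring
        _ = g := by rw [ih, hAg]
  -- key formula
  have hm : ∀ (n : ℕ) (c : ℝ), (A ^ n)ᵀ * (g + c • vecMulVec u u) * (A ^ n)
      = g + (c * ((l⁻¹) ^ n) ^ 2) • vecMulVec u u := by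
    intro n c
    rw [Matrix.mul_add, Matrix.add_mul, hAng n, Matrix.mul_smul, Matrix.smul_mul,
      vecMulVec_conj, hAnu n]
    congr 1
    ext i j
    simp [Matrix.vecMulVec_apply, Matrix.smul_apply, smul_eq_mul]
    ring
  have hkey : ∀ n x i j, h n x i j
      = g i j + (((l⁻¹) ^ n) ^ 2 * (u i * u j)) * f ((A ^ n) *ᵥ x) := by
    intro n x i j
    rw [hdef n x, hm n (f ((A ^ n) *ᵥ x))]
    simp [Matrix.add_apply, Matrix.smul_apply, Matrix.vecMulVec_apply, smul_eq_mul]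
    ring
  -- bounds on f and its derivative
  obtain ⟨M, hM0, hM⟩ := periodic_bound f hf.continuous hper
  have hfderper : ∀ (x : Fin 2 → ℝ) (z : Fin 2 → ℤ),
      fderiv ℝ f (x + fun i => (z i : ℝ)) = fderiv ℝ f x := by
    intro x z
    set c : Fin 2 → ℝ := fun i => (z i : ℝ) with hc
    have hco : (f ∘ fun y => y + c) = f := funext fun y => hper y z
    have hdt : DifferentiableAt ℝ (fun y : Fin 2 → ℝ => y + c) x :=
      (differentiable_id.add_const c).differentiableAt
    have hdf : DifferentiableAt ℝ f (x + c) := (hf.differentiable one_ne_zero).differentiableAt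
    have h3 : fderiv ℝ (fun y : Fin 2 → ℝ => y + c) x = ContinuousLinearMap.id ℝ _ := by
      rw [fderiv_add_const]; exact fderiv_id'
    have h4 : fderiv ℝ (f ∘ fun y : Fin 2 → ℝ => y + c) x
        = (fderiv ℝ f (x + c)).comp (fderiv ℝ (fun y : Fin 2 → ℝ => y + c) x) :=
      fderiv_comp x hdf hdt
    have h5 : fderiv ℝ f x = fderiv ℝ f (x + c) := by
      conv_lhs => rw [← hco]
      rw [h4, h3, ContinuousLinearMap.comp_id]
    exact h5.symm
  obtain ⟨M', hM'0, hM'⟩ := periodic_bound (fun x => ‖fderiv ℝ f x‖)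
    ((hf.continuous_fderiv one_ne_zero).norm)
    (fun x z => by simp only [hfderper x z])
  have hM'' : ∀ x, ‖fderiv ℝ f x‖ ≤ M' := by
    intro x
    have := hM' x
    rwa [abs_of_nonneg (norm_nonneg _)] at this
  -- entries of A ^ n
  have hAnn : ∀ (n : ℕ) (i j : Fin 2), 0 ≤ (A ^ n) i j := by
    intro n
    induction n with
    | zero => intro i j; rw [pow_zero, Matrix.one_apply]; split <;> norm_num
    | succ n ih =>
      intro i j
      rw [pow_succ, Matrix.mul_apply]
      apply Finset.sum_nonneg
      intro k _
      apply mul_nonneg (ih i k)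
      fin_cases k <;> fin_cases j <;> simp [hA] <;> norm_num
  have hAv : A *ᵥ ![l - 1, 1] = l • ![l - 1, 1] := by
    funext i
    fin_cases i <;>
      simp [hA, Matrix.mulVec, dotProduct, Fin.sum_univ_two] <;> nlinarith [hl2]
  have hAnv : ∀ n : ℕ, (A ^ n) *ᵥ ![l - 1, 1] = l ^ n • ![l - 1, 1] := by
    intro n
    induction n with
    | zero => simp
    | succ n ih =>
      rw [pow_succ, ← Matrix.mulVec_mulVec, hAv, Matrix.mulVec_smul, ih, smul_smul, pow_succ]
      ring_nf
  have hv2 : ∀ k : Fin 2, ![l - 1, 1] k ≤ l - 1 := by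
    intro k; fin_cases k <;> simp <;> linarith
  have hEnt : ∀ (n : ℕ) (i j : Fin 2), (A ^ n) i j ≤ (l - 1) * l ^ n := by
    intro n i j
    have hc := congrFun (hAnv n) i
    simp only [Matrix.mulVec, dotProduct, Fin.sum_univ_two, Pi.smul_apply,
      smul_eq_mul, Matrix.cons_val_zero, Matrix.cons_val_one, Matrix.head_cons] at hc
    have hpow : (0 : ℝ) < l ^ n := pow_pos hl0 n
    have h0 := hAnn n i 0
    have h1 := hAnn n i 1
    have key : l ^ n * ![l - 1, 1] i ≤ l ^ n * (l - 1) :=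
      mul_le_mul_of_nonneg_left (hv2 i) hpow.le
    have hb0 : (A ^ n) i 0 ≤ (l - 1) * l ^ n := by
      nlinarith [mul_nonneg h0 (by linarith : (0:ℝ) ≤ l - 2), hc, key, h1]
    have hb1 : (A ^ n) i 1 ≤ (l - 1) * l ^ n := by
      nlinarith [mul_nonneg h0 (by linarith : (0:ℝ) ≤ l - 1), hc, key]
    fin_cases j
    · exact hb0
    · exact hb1
  -- the continuous linear map of multiplication by A ^ n, and its norm bound
  set φ : ℕ → (Fin 2 → ℝ) →L[ℝ] (Fin 2 → ℝ) :=
    fun n => LinearMap.toContinuousLinearMap (Matrix.mulVecLin (A ^ n)) with hφdef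
  have hφ : ∀ n x, φ n x = (A ^ n) *ᵥ x := by intro n x; simp [hφdef]
  have hφnorm : ∀ n, ‖φ n‖ ≤ 2 * (l - 1) * l ^ n := by
    intro n
    have hpow : (0 : ℝ) < l ^ n := pow_pos hl0 n
    apply ContinuousLinearMap.opNorm_le_bound _ (by nlinarith)
    intro v
    rw [hφ, pi_norm_le_iff_of_nonneg
      (mul_nonneg (by nlinarith : (0:ℝ) ≤ 2 * (l - 1) * l ^ n) (norm_nonneg v))]
    intro i
    have hv0 : |v 0| ≤ ‖v‖ := by rw [← Real.norm_eq_abs]; exact norm_le_pi_norm v 0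
    have hv1 : |v 1| ≤ ‖v‖ := by rw [← Real.norm_eq_abs]; exact norm_le_pi_norm v 1
    have hmv : ((A ^ n) *ᵥ v) i = (A ^ n) i 0 * v 0 + (A ^ n) i 1 * v 1 := by
      simp [Matrix.mulVec, dotProduct, Fin.sum_univ_two]
    rw [Real.norm_eq_abs, hmv]
    have h0 := hAnn n i 0
    have h1 := hAnn n i 1
    have e0' := hEnt n i 0
    have e1' := hEnt n i 1
    calc |(A ^ n) i 0 * v 0 + (A ^ n) i 1 * v 1|
        ≤ |(A ^ n) i 0 * v 0| + |(A ^ n) i 1 * v 1| := abs_add_le _ _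
      _ = (A ^ n) i 0 * |v 0| + (A ^ n) i 1 * |v 1| := by
          rw [abs_mul, abs_mul, abs_of_nonneg h0, abs_of_nonneg h1]
      _ ≤ 2 * (l - 1) * l ^ n * ‖v‖ := by
          have p0 : (A ^ n) i 0 * |v 0| ≤ (l - 1) * l ^ n * ‖v‖ :=
            mul_le_mul e0' hv0 (abs_nonneg _) (by nlinarith)
          have p1 : (A ^ n) i 1 * |v 1| ≤ (l - 1) * l ^ n * ‖v‖ :=
            mul_le_mul e1' hv1 (abs_nonneg _) (by nlinarith)
          nlinarith [p0, p1]
  -- derivative of F n := f ((A ^ n) *ᵥ ·)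
  have hFeq : ∀ n : ℕ, (fun y => f ((A ^ n) *ᵥ y)) = f ∘ (φ n) := by
    intro n; funext y; rw [Function.comp_apply, hφ]
  have hFdiff : ∀ (n : ℕ) (x : Fin 2 → ℝ), DifferentiableAt ℝ (fun y => f ((A ^ n) *ᵥ y)) x := by
    intro n x
    rw [hFeq n]
    exact ((hf.differentiable one_ne_zero) (φ n x)).comp x (φ n).differentiableAt
  have hFbound : ∀ (n : ℕ) (x : Fin 2 → ℝ),
      ‖fderiv ℝ (fun y => f ((A ^ n) *ᵥ y)) x‖ ≤ M' * (2 * (l - 1) * l ^ n) := by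
    intro n x
    have hd : fderiv ℝ (fun y => f ((A ^ n) *ᵥ y)) x
        = (fderiv ℝ f (φ n x)).comp (fderiv ℝ (φ n) x) := by
      rw [hFeq n]
      exact fderiv_comp x ((hf.differentiable one_ne_zero) (φ n x)) (φ n).differentiableAt
    rw [hd, (φ n).fderiv]
    calc ‖(fderiv ℝ f (φ n x)).comp (φ n : (Fin 2 → ℝ) →L[ℝ] (Fin 2 → ℝ))‖
        ≤ ‖fderiv ℝ f (φ n x)‖ * ‖φ n‖ := ContinuousLinearMap.opNorm_comp_le _ _
      _ ≤ M' * (2 * (l - 1) * l ^ n) :=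
          mul_le_mul (hM'' _) (hφnorm n) (norm_nonneg _) hM'0
  -- the constants
  set B : ℝ := max |u 0| |u 1| with hBdef
  have hB : ∀ i : Fin 2, |u i| ≤ B := by
    intro i
    fin_cases i
    · exact le_max_left _ _
    · exact le_max_right _ _
  have hB0 : 0 ≤ B := le_trans (abs_nonneg _) (hB 0)
  have hq0 : (0 : ℝ) < l⁻¹ := inv_pos.mpr hl0
  have hq1 : l⁻¹ < 1 := inv_lt_one_of_one_lt₀ hl
  have hqn1 : ∀ n : ℕ, l⁻¹ ^ n ≤ 1 := fun n => pow_le_one₀ hq0.le hq1.le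
  have hql : ∀ n : ℕ, l⁻¹ ^ n * l ^ n = 1 := fun n => by
    rw [← mul_pow, inv_mul_cancel₀ (ne_of_gt hl0), one_pow]
  constructor
  · -- uniform convergence of h n to g
    intro ε hε
    obtain ⟨N, hN⟩ := exists_N_pow l⁻¹ (M * (B * B)) ε hq0.le hq1 hε
    refine ⟨N, fun n hn x i j => lt_of_le_of_lt ?_ (hN n hn)⟩
    rw [hkey n x i j, add_sub_cancel_left]
    have hs : (l⁻¹ ^ n) ^ 2 ≤ l⁻¹ ^ n := by
      nlinarith [pow_nonneg hq0.le n, hqn1 n]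
    have hq2 : (0 : ℝ) ≤ (l⁻¹ ^ n) ^ 2 := sq_nonneg _
    calc |(l⁻¹ ^ n) ^ 2 * (u i * u j) * f ((A ^ n) *ᵥ x)|
        = (l⁻¹ ^ n) ^ 2 * (|u i| * |u j|) * |f ((A ^ n) *ᵥ x)| := by
          rw [abs_mul, abs_mul, abs_mul, abs_of_nonneg hq2]
      _ ≤ (l⁻¹ ^ n) ^ 2 * (B * B) * M := by
          apply mul_le_mul _ (hM _) (abs_nonneg _) (by positivity)
          exact mul_le_mul_of_nonneg_left
            (mul_le_mul (hB i) (hB j) (abs_nonneg _) hB0) hq2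
      _ ≤ l⁻¹ ^ n * (M * (B * B)) := by
          nlinarith [mul_nonneg (mul_nonneg (sub_nonneg.mpr hs) (mul_nonneg hB0 hB0)) hM0]
  · -- uniform convergence of the derivatives to 0
    intro ε hε
    obtain ⟨N, hN⟩ := exists_N_pow l⁻¹ ((B * B) * (M' * (2 * (l - 1)))) ε hq0.le hq1 hε
    refine ⟨N, fun n hn x i j => lt_of_le_of_lt ?_ (hN n hn)⟩
    have heq : (fun y => h n y i j)
        = fun y => g i j + (l⁻¹ ^ n) ^ 2 * (u i * u j) * f ((A ^ n) *ᵥ y) :=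
      funext fun y => hkey n y i j
    rw [heq, fderiv_const_add, fderiv_const_mul (hFdiff n x), norm_smul]
    have c1 : ‖(l⁻¹ ^ n) ^ 2 * (u i * u j)‖ ≤ (l⁻¹ ^ n) ^ 2 * (B * B) := by
      rw [Real.norm_eq_abs, abs_mul, abs_of_nonneg (sq_nonneg _), abs_mul]
      exact mul_le_mul_of_nonneg_left
        (mul_le_mul (hB i) (hB j) (abs_nonneg _) hB0) (sq_nonneg _)
    have c2 := hFbound n x
    calc ‖(l⁻¹ ^ n) ^ 2 * (u i * u j)‖ * ‖fderiv ℝ (fun y => f ((A ^ n) *ᵥ y)) x‖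
        ≤ ((l⁻¹ ^ n) ^ 2 * (B * B)) * (M' * (2 * (l - 1) * l ^ n)) := by
          apply mul_le_mul c1 c2 (norm_nonneg _) (by positivity)
      _ = l⁻¹ ^ n * ((B * B) * (M' * (2 * (l - 1)))) := by
          linear_combination (B * B) * (M' * (2 * (l - 1))) * l⁻¹ ^ n * hql n
end
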